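/- arXiv:1912.06702 — 6 statements merged into one kernel-verified Lean document; each statement's English description precedes it below -/
import Mathlib

section
/- For all secondary colors p = a_r a_s (with r < s) and q = a_x a_y (with x < y), the minimum of k − l over all pairs of integers (k, l) such that β(k_p) ≻ α(l_q) equals χ(r ≤ y) + χ(r ≤ x)·χ(s ≤ y), and this quantity equals Δ(p, q) := 1 + χ(p ≤ q) − χ((p,q) ∈ SP), the minimal value of k − l for which k_p ≫ l_q holds. -/
open Classical in
/-- `χ(P)` is `1` if `P` holds and `0` otherwise. -/
noncomputable def chi (P : Prop) : ℤ := if P then 1 else 0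

/-- Colors: `Sum.inl i` is the primary color `a_i`; `Sum.inr (i, j)` (with `i < j`)
is the secondary color `a_i a_j`. -/
abbrev Col := ℕ ⊕ (ℕ × ℕ)

/-- A colored part: an integer size together with a color. -/
structure CPart where
  size : ℤ
  col : Col

/-- Numerical key realizing the total order
`a_1a_2 < ⋯ < a_1a_n < a_1 < a_2a_3 < ⋯ < a_{n-1}a_n < a_{n-1} < a_n`
on the primary and secondary colors (for indices in `[1, n]`). -/
def colKey (n : ℕ) : Col → ℕ
  | Sum.inl i => i * (n + 2) + (n + 1)
  | Sum.inr (i, j) => i * (n + 2) + j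

/-- Order `p ≤ q` on colors. -/
def colLE (n : ℕ) (p q : Col) : Prop := colKey n p ≤ colKey n q

/-- Order `p < q` on colors. -/
def colLT (n : ℕ) (p q : Col) : Prop := colKey n p < colKey n q

def isPri : Col → Prop := fun c => ∃ i, c = Sum.inl i

/-- Special pairs of secondary colors:
`(a_r a_s, a_x a_y)` with `x < y < r < s` or `r < x < y < s`. -/
def SP : Col → Col → Prop
  | Sum.inr (r, s), Sum.inr (x, y) => (x < y ∧ y < r ∧ r < s) ∨ (r < x ∧ x < y ∧ y < s)
  | _, _ => False

/-- `x ≻ y`, i.e. `k_p ≻ l_q ↔ k - l ≥ χ(p ≤ q)`. -/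
def succR (n : ℕ) (x y : CPart) : Prop := chi (colLE n x.col y.col) ≤ x.size - y.size

/-- `x ⪰ y` (i.e. `x ≻ y` or `x = y`), equivalently `k - l ≥ χ(p < q)`. -/
def succeqR (n : ℕ) (x y : CPart) : Prop := chi (colLT n x.col y.col) ≤ x.size - y.size

/-- Add an integer to the size of a part (the color is unchanged). -/
def shift (x : CPart) (m : ℤ) : CPart := ⟨x.size + m, x.col⟩

/-- `x ▷ y` : `k_p ⪰ (l+1)_q` if `p` or `q` is primary, `k_p ≻ (l+1)_q` if both secondary. -/
def rtri (n : ℕ) (x y : CPart) : Prop :=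
  ((isPri x.col ∨ isPri y.col) ∧ succeqR n x (shift y 1)) ∨
  (¬(isPri x.col ∨ isPri y.col) ∧ succR n x (shift y 1))

/-- `x ≫ y` : `k_p ⪰ (l+1)_q` if `p` or `q` is primary; `k_p ≻ (l+1)_q` if both
secondary with `(p,q) ∉ SP`; `k_p ≻ l_q` if `(p,q) ∈ SP`. -/
def gg (n : ℕ) (x y : CPart) : Prop :=
  ((isPri x.col ∨ isPri y.col) ∧ succeqR n x (shift y 1)) ∨
  (¬(isPri x.col ∨ isPri y.col) ∧ ¬ SP x.col y.col ∧ succR n x (shift y 1)) ∨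
  (SP x.col y.col ∧ succR n x y)

/-- Upper half `α` of a secondary part of size `k` and color `a_i a_j`:
`α((2m)_{a_ia_j}) = m_{a_j}`, `α((2m+1)_{a_ia_j}) = (m+1)_{a_i}`. -/
def alphaP (k : ℤ) (i j : ℕ) : CPart :=
  if k % 2 = 0 then ⟨k / 2, Sum.inl j⟩ else ⟨(k + 1) / 2, Sum.inl i⟩

/-- Lower half `β` of a secondary part of size `k` and color `a_i a_j`:
`β((2m)_{a_ia_j}) = m_{a_i}`, `β((2m+1)_{a_ia_j}) = m_{a_j}`. -/
def betaP (k : ℤ) (i j : ℕ) : CPart :=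
  if k % 2 = 0 then ⟨k / 2, Sum.inl i⟩ else ⟨(k - 1) / 2, Sum.inl j⟩

/-- `Δ(p, q) = 1 + χ(p ≤ q) - χ((p,q) ∈ SP)`. -/
noncomputable def Delta (n : ℕ) (p q : Col) : ℤ :=
  1 + chi (colLE n p q) - chi (SP p q)

/-- Members of `P`: parts of positive size with a (valid) primary color. -/
def inP (n : ℕ) (x : CPart) : Prop :=
  1 ≤ x.size ∧ ∃ i, 1 ≤ i ∧ i ≤ n ∧ x.col = Sum.inl i

/-- Members of `S`: parts of size at least 2 with a (valid) secondary color. -/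
def inS (n : ℕ) (x : CPart) : Prop :=
  2 ≤ x.size ∧ ∃ i j, 1 ≤ i ∧ i < j ∧ j ≤ n ∧ x.col = Sum.inr (i, j)

/-- `O`: sequences `λ_1 ≻ ⋯ ≻ λ_t` of parts in `P`. -/
def memO (n : ℕ) (l : List CPart) : Prop :=
  (∀ x ∈ l, inP n x) ∧ l.Chain' (succR n)

/-- `E`: sequences `ν_1 ≫ ⋯ ≫ ν_t` of parts in `P ⊔ S`. -/
def memE (n : ℕ) (l : List CPart) : Prop :=
  (∀ x ∈ l, inP n x ∨ inS n x) ∧ l.Chain' (gg n)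

/-- `E₂`: sequences `ν_1 ▷ ⋯ ▷ ν_t` of parts in `P ⊔ S`. -/
def memE2 (n : ℕ) (l : List CPart) : Prop :=
  (∀ x ∈ l, inP n x ∨ inS n x) ∧ l.Chain' (rtri n)

/-- The size of a partition: the sum of the sizes of its parts. -/
def psize (l : List CPart) : ℤ := (l.map CPart.size).sum

/-- The multiset of primary-color indices contributed by one color. -/
def colContrib : Col → Multiset ℕ
  | Sum.inl i => {i}
  | Sum.inr (i, j) => {i, j}

/-- The color product of a partition, as a multiset of primary-color indices. -/
def colorProd (l : List CPart) : Multiset ℕ := (l.map (fun x => colContrib x.col)).sum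

/-- The expanded sequence of a partition: each primary part is kept (tag `0`); each
secondary part is replaced by its upper half (tag `1`) followed by its lower half
(tag `2`). The third component records the original part. -/
def expandTag (l : List CPart) : List (CPart × ℕ × CPart) :=
  (l.map (fun x =>
    match x.col with
    | Sum.inl _ => [(x, 0, x)]
    | Sum.inr (i, j) => [(alphaP x.size i j, 1, x), (betaP x.size i j, 2, x)])).flatten

/-- Length `p + 2s` of the expanded sequence. -/
def elen (l : List CPart) : ℕ := (expandTag l).length

/-- `ν_x` (1-based indexing in the expanded sequence), with the convention
`ν_{p+2s+1} = 0_{a_n}` (and the same default beyond). -/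
def nuAt (n : ℕ) (l : List CPart) (x : ℕ) : CPart :=
  ((expandTag l).getD (x - 1) (⟨0, Sum.inl n⟩, 3, ⟨0, Sum.inl n⟩)).1

/-- The tag of position `x` (1-based): `0` primary, `1` upper half, `2` lower half,
`3` out of range. -/
def tagAt (l : List CPart) (x : ℕ) : ℕ :=
  ((expandTag l).getD (x - 1) (⟨0, Sum.inl 0⟩, 3, ⟨0, Sum.inl 0⟩)).2.1

/-- The original (primary or secondary) part occupying position `x`. -/
def origAt (n : ℕ) (l : List CPart) (x : ℕ) : CPart :=
  ((expandTag l).getD (x - 1) (⟨0, Sum.inl n⟩, 3, ⟨0, Sum.inl n⟩)).2.2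

/-- `I`: the set of (1-based) indices of upper halves of secondary parts. -/
def Iset (l : List CPart) : Set ℕ := {x | 1 ≤ x ∧ tagAt l x = 1}

/-- `J`: the set of (1-based) indices of primary parts. -/
def Jset (l : List CPart) : Set ℕ := {x | 1 ≤ x ∧ tagAt l x = 0}

/-- `j = min((i, p+2s+1] ∩ (J ∪ {p+2s+1}))`. -/
noncomputable def nextJ (l : List CPart) (i : ℕ) : ℕ :=
  sInf {x | i < x ∧ (x ∈ Jset l ∨ x = elen l + 1)}

/-- The condition `ν_{i'+1} ⊁ ν_u + (u - i')/2 - 1` for all `i' ∈ [i, u) ∩ I`. -/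
def brCond (n : ℕ) (l : List CPart) (i u : ℕ) : Prop :=
  ∀ i' ∈ Iset l, i ≤ i' → i' < u →
    ¬ succR n (nuAt n l (i' + 1)) (shift (nuAt n l u) (((u : ℤ) - (i' : ℤ)) / 2 - 1))

open Classical in
/-- The Bridge `Br_ν(i)`. -/
noncomputable def Br (n : ℕ) (l : List CPart) (i : ℕ) : ℕ :=
  if brCond n l i (nextJ l i) then nextJ l i
  else if {u | u ∈ Iset l ∧ i < u ∧ u < nextJ l i ∧ brCond n l i u}.Nonempty then
    sSup {u | u ∈ Iset l ∧ i < u ∧ u < nextJ l i ∧ brCond n l i u}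
  else i

/-- `TS(ν)`: indices of the troublesome secondary parts. -/
def TSet (n : ℕ) (l : List CPart) : Set ℕ :=
  {i | i ∈ Iset l ∧ (i + 2) ∈ Iset l ∧
    ¬ rtri n (origAt n l i) (origAt n l (i + 2)) ∧
    (i = 1 ∨ rtri n (origAt n l (i - 1)) (origAt n l i))}

/-- `E₁`: partitions in `E` such that for every `i ∈ TS(ν)` with `Br_ν(i) > i` one has
`ν_i + ν_{i+1} ≻ ν_{Br_ν(i)} + (Br_ν(i) - i)/2`. -/
def memE1 (n : ℕ) (l : List CPart) : Prop :=
  memE n l ∧ ∀ i ∈ TSet n l, i < Br n l i →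
    succR n (origAt n l i)
      (shift (nuAt n l (Br n l i)) (((Br n l i : ℤ) - (i : ℤ)) / 2))

/-- `hasIdx i c` : the color `c` contains the primary color `a_i`. -/
def hasIdx (i : ℕ) : Col → Bool
  | Sum.inl j => j == i
  | Sum.inr (j, k) => j == i || k == i

/-- Number of parts of `l` whose color contains `a_i`. -/
def countIdx (i : ℕ) (l : List CPart) : ℕ := l.countP (fun x => hasIdx i x.col)

/-- A partition into `u` distinct positive parts. -/
def distinctParts (u : ℕ) (l : List ℕ) : Prop :=
  l.Chain' (· > ·) ∧ (∀ x ∈ l, 0 < x) ∧ l.length = u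

lemma colLE_inl (n i j : ℕ) : colLE n (Sum.inl i) (Sum.inl j) ↔ i ≤ j := by
  simp only [colLE, colKey]
  constructor
  · intro h
    by_contra h'
    push_neg at h'
    have : j + 1 ≤ i := h'
    nlinarith
  · intro h
    nlinarith

lemma colLE_inr (n r s x y : ℕ) (hs : s ≤ n + 1) (hy : y ≤ n + 1) :
    colLE n (Sum.inr (r, s)) (Sum.inr (x, y)) ↔ r < x ∨ (r = x ∧ s ≤ y) := by
  simp only [colLE, colKey]
  constructor
  · intro h
    rcases Nat.lt_trichotomy r x with h' | h' | h'
    · exact Or.inl h'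
    · subst h'; right; constructor; rfl; omega
    · exfalso
      have : x + 1 ≤ r := h'
      nlinarith
  · rintro (h' | ⟨rfl, h'⟩)
    · have : r + 1 ≤ x := h'
      nlinarith
    · omega

/-- For secondary colors `p = a_r a_s` and `q = a_x a_y`, the minimum of
`k − l` over all integer pairs with `β(k_p) ≻ α(l_q)` equals
`χ(r ≤ y) + χ(r ≤ x)·χ(s ≤ y)`, and this equals `Δ(p, q) = 1 + χ(p ≤ q) − χ((p,q) ∈ SP)`. -/
theorem stmt_8 (n r s x y : ℕ) (hr : 1 ≤ r) (hrs : r < s) (hsn : s ≤ n)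
    (hx : 1 ≤ x) (hxy : x < y) (hyn : y ≤ n) :
    IsLeast {d : ℤ | ∃ k l : ℤ, succR n (betaP k r s) (alphaP l x y) ∧ d = k - l}
        (chi (r ≤ y) + chi (r ≤ x) * chi (s ≤ y)) ∧
      chi (r ≤ y) + chi (r ≤ x) * chi (s ≤ y) =
        Delta n (Sum.inr (r, s)) (Sum.inr (x, y)) := by
  constructor
  · constructor
    · -- membership: exhibit witnesses in each case
      by_cases h1 : r ≤ y
      · by_cases h2 : r ≤ x
        · by_cases h3 : s ≤ y
          · -- target 2 : k = 2, l = 0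
            refine ⟨2, 0, ?_, ?_⟩
            · simp only [succR, betaP, alphaP, chi]
              norm_num [colLE_inl]
              omega
            · simp [chi, h1, h2, h3]
          · -- target 1 : k = 1, l = 0 (uses s > y)
            refine ⟨1, 0, ?_, ?_⟩
            · simp only [succR, betaP, alphaP, chi]
              norm_num [colLE_inl]
              omega
            · simp [chi, h1, h2, h3]
        · -- target 1 : k = 0, l = -1 (uses r > x)
          refine ⟨0, -1, ?_, ?_⟩
          · simp only [succR, betaP, alphaP, chi]
            norm_num [colLE_inl]
            omega
          · simp [chi, h1, h2]
      · -- target 0 : k = 0, l = 0 (uses r > y)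
        refine ⟨0, 0, ?_, ?_⟩
        · simp only [succR, betaP, alphaP, chi]
          norm_num [colLE_inl]
          omega
        · have h2 : ¬ r ≤ x := by omega
          simp [chi, h1, h2]
    · rintro d ⟨k, l, h, rfl⟩
      by_cases hk : k % 2 = 0 <;> by_cases hl : l % 2 = 0 <;>
        simp only [succR, betaP, alphaP, hk, hl, if_pos, if_neg, chi, colLE_inl,
          reduceIte] at h <;>
        simp only [chi] <;>
        split_ifs at h ⊢ <;> omega
  · have hkey := colLE_inr n r s x y (by omega) (by omega)
    simp only [Delta, chi, SP, hkey]
    split_ifs <;> omega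
end

section
/- For all secondary colors p and q and all integers k, l: if k − l = Δ(p, q) then β(l_q) + 1 ⪰ β(k_p); and if k − l > Δ(p, q) then β(k_p) ≻ α(l_q). -/
lemma mul_step (n u v : ℕ) (h : u < v) : u * (n + 2) + (n + 2) ≤ v * (n + 2) := by
  calc u * (n + 2) + (n + 2) = (u + 1) * (n + 2) := by ring
    _ ≤ v * (n + 2) := Nat.mul_le_mul_right _ h

lemma colLT_inl_iff (n a b : ℕ) : colLT n (Sum.inl a) (Sum.inl b) ↔ a < b := by
  simp only [colLT, colKey]
  constructor
  · intro h
    by_contra hc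
    push_neg at hc
    rcases Nat.eq_or_lt_of_le hc with h1 | h1
    · subst h1; omega
    · have := mul_step n b a h1; omega
  · intro h
    have := mul_step n a b h; omega

lemma colLE_inl_iff (n a b : ℕ) : colLE n (Sum.inl a) (Sum.inl b) ↔ a ≤ b := by
  simp only [colLE, colKey]
  constructor
  · intro h
    by_contra hc
    push_neg at hc
    have := mul_step n b a hc; omega
  · intro h
    rcases Nat.eq_or_lt_of_le h with h1 | h1
    · subst h1; omega
    · have := mul_step n a b h1; omega

lemma colLE_inr_iff (n r s x y : ℕ) (hs : s ≤ n + 1) (hy : y ≤ n + 1) :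
    colLE n (Sum.inr (r, s)) (Sum.inr (x, y)) ↔ (r < x ∨ (r = x ∧ s ≤ y)) := by
  simp only [colLE, colKey]
  constructor
  · intro h
    rcases lt_trichotomy r x with h1 | h1 | h1
    · exact Or.inl h1
    · exact Or.inr ⟨h1, by subst h1; omega⟩
    · exfalso; have := mul_step n x r h1; omega
  · rintro (h | ⟨rfl, h⟩)
    · have := mul_step n r x h; omega
    · omega

lemma succR_inl (n : ℕ) (u v : ℤ) (a b : ℕ) :
    succR n ⟨u, Sum.inl a⟩ ⟨v, Sum.inl b⟩ ↔ (if a ≤ b then (1:ℤ) else 0) ≤ u - v := by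
  unfold succR chi
  by_cases hab : a ≤ b
  · rw [if_pos ((colLE_inl_iff n a b).mpr hab), if_pos hab]
  · rw [if_neg (fun hc => hab ((colLE_inl_iff n a b).mp hc)), if_neg hab]

lemma succeqR_inl (n : ℕ) (u v : ℤ) (a b : ℕ) :
    succeqR n ⟨u, Sum.inl a⟩ ⟨v, Sum.inl b⟩ ↔ (if a < b then (1:ℤ) else 0) ≤ u - v := by
  unfold succeqR chi
  by_cases hab : a < b
  · rw [if_pos ((colLT_inl_iff n a b).mpr hab), if_pos hab]
  · rw [if_neg (fun hc => hab ((colLT_inl_iff n a b).mp hc)), if_neg hab]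

/-- For secondary colors `p, q` and integers `k, l`:
if `k − l = Δ(p, q)` then `β(l_q) + 1 ⪰ β(k_p)`; if `k − l > Δ(p, q)` then
`β(k_p) ≻ α(l_q)`. -/
theorem stmt_11 (n r s x y : ℕ) (hr : 1 ≤ r) (hrs : r < s) (hsn : s ≤ n)
    (hx : 1 ≤ x) (hxy : x < y) (hyn : y ≤ n) (k l : ℤ) :
    (k - l = Delta n (Sum.inr (r, s)) (Sum.inr (x, y)) →
      succeqR n (shift (betaP l x y) 1) (betaP k r s)) ∧
    (Delta n (Sum.inr (r, s)) (Sum.inr (x, y)) < k - l →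
      succR n (betaP k r s) (alphaP l x y)) := by
  have hP : colLE n (Sum.inr (r, s)) (Sum.inr (x, y)) ↔ (r < x ∨ (r = x ∧ s ≤ y)) :=
    colLE_inr_iff n r s x y (by omega) (by omega)
  have hSP : SP (Sum.inr (r, s)) (Sum.inr (x, y)) ↔
      ((x < y ∧ y < r ∧ r < s) ∨ (r < x ∧ x < y ∧ y < s)) := Iff.rfl
  have hD : Delta n (Sum.inr (r, s)) (Sum.inr (x, y)) =
      1 + (if r < x ∨ (r = x ∧ s ≤ y) then (1:ℤ) else 0) -
      (if (x < y ∧ y < r ∧ r < s) ∨ (r < x ∧ x < y ∧ y < s) then (1:ℤ) else 0) := by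
    simp only [Delta, chi, hP, hSP]
  rw [hD]
  rcases Int.emod_two_eq k with hk | hk <;> rcases Int.emod_two_eq l with hl | hl
  · constructor
    · intro h
      rw [show betaP l x y = ({ size := l / 2, col := Sum.inl x } : CPart) from by simp [betaP, hl],
          show betaP k r s = ({ size := k / 2, col := Sum.inl r } : CPart) from by simp [betaP, hk],
          show shift ({ size := l / 2, col := Sum.inl x } : CPart) 1 = ({ size := l / 2 + 1, col := Sum.inl x } : CPart) from rfl,
          succeqR_inl]
      split_ifs at h ⊢ <;> omega
    · intro h
      rw [show betaP k r s = ({ size := k / 2, col := Sum.inl r } : CPart) from by simp [betaP, hk],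
          show alphaP l x y = ({ size := l / 2, col := Sum.inl y } : CPart) from by simp [alphaP, hl],
          succR_inl]
      split_ifs at h ⊢ <;> omega
  · constructor
    · intro h
      rw [show betaP l x y = ({ size := (l - 1) / 2, col := Sum.inl y } : CPart) from by simp [betaP, hl],
          show betaP k r s = ({ size := k / 2, col := Sum.inl r } : CPart) from by simp [betaP, hk],
          show shift ({ size := (l - 1) / 2, col := Sum.inl y } : CPart) 1 = ({ size := (l - 1) / 2 + 1, col := Sum.inl y } : CPart) from rfl,
          succeqR_inl]
      split_ifs at h ⊢ <;> omega
    · intro h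
      rw [show betaP k r s = ({ size := k / 2, col := Sum.inl r } : CPart) from by simp [betaP, hk],
          show alphaP l x y = ({ size := (l + 1) / 2, col := Sum.inl x } : CPart) from by simp [alphaP, hl],
          succR_inl]
      split_ifs at h ⊢ <;> omega
  · constructor
    · intro h
      rw [show betaP l x y = ({ size := l / 2, col := Sum.inl x } : CPart) from by simp [betaP, hl],
          show betaP k r s = ({ size := (k - 1) / 2, col := Sum.inl s } : CPart) from by simp [betaP, hk],
          show shift ({ size := l / 2, col := Sum.inl x } : CPart) 1 = ({ size := l / 2 + 1, col := Sum.inl x } : CPart) from rfl,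
          succeqR_inl]
      split_ifs at h ⊢ <;> omega
    · intro h
      rw [show betaP k r s = ({ size := (k - 1) / 2, col := Sum.inl s } : CPart) from by simp [betaP, hk],
          show alphaP l x y = ({ size := l / 2, col := Sum.inl y } : CPart) from by simp [alphaP, hl],
          succR_inl]
      split_ifs at h ⊢ <;> omega
  · constructor
    · intro h
      rw [show betaP l x y = ({ size := (l - 1) / 2, col := Sum.inl y } : CPart) from by simp [betaP, hl],
          show betaP k r s = ({ size := (k - 1) / 2, col := Sum.inl s } : CPart) from by simp [betaP, hk],
          show shift ({ size := (l - 1) / 2, col := Sum.inl y } : CPart) 1 = ({ size := (l - 1) / 2 + 1, col := Sum.inl y } : CPart) from rfl,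
          succeqR_inl]
      split_ifs at h ⊢ <;> omega
    · intro h
      rw [show betaP k r s = ({ size := (k - 1) / 2, col := Sum.inl s } : CPart) from by simp [betaP, hk],
          show alphaP l x y = ({ size := (l + 1) / 2, col := Sum.inl x } : CPart) from by simp [alphaP, hl],
          succR_inl]
      split_ifs at h ⊢ <;> omega
end

section
/- Let ν ∈ E with associated index sets I and J and Bridge function Br_ν. Then Br_ν is non-decreasing on I (i.e., for i ≤ i' in I, Br_ν(i) ≤ Br_ν(i')), and for every i ∈ I such that Br_ν(i) ∈ I, one has Br_ν(Br_ν(i)) = Br_ν(i). -/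
section Aux

lemma expand_struct (L : List CPart) (t : ℕ) (a x : CPart)
    (h : (expandTag L)[t]? = some (a, 1, x)) :
    x ∈ L ∧ ∃ i0 j0 : ℕ, x.col = Sum.inr (i0, j0) ∧ a = alphaP x.size i0 j0 ∧
      (expandTag L)[t + 1]? = some (betaP x.size i0 j0, 2, x) := by
  induction L generalizing t with
  | nil => simp [expandTag] at h
  | cons y L ih =>
    rcases hy : y.col with i | ⟨i0, j0⟩
    · have he : expandTag (y :: L) = (y, 0, y) :: expandTag L := by
        simp [expandTag, hy]
      rw [he] at h ⊢
      cases t with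
      | zero => simp [Prod.ext_iff] at h
      | succ t =>
        rw [List.getElem?_cons_succ] at h
        obtain ⟨hm, hrest⟩ := ih t h
        exact ⟨List.mem_cons_of_mem _ hm, by simpa using hrest⟩
    · have he : expandTag (y :: L) =
          (alphaP y.size i0 j0, 1, y) :: (betaP y.size i0 j0, 2, y) :: expandTag L := by
        simp [expandTag, hy]
      rw [he] at h ⊢
      cases t with
      | zero =>
        simp [Prod.ext_iff] at h
        obtain ⟨ha, hx⟩ := h
        subst hx
        exact ⟨List.mem_cons_self, i0, j0, hy, ha.symm, by simp⟩
      | succ t =>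
        cases t with
        | zero => simp [Prod.ext_iff] at h
        | succ t =>
          rw [List.getElem?_cons_succ, List.getElem?_cons_succ] at h
          obtain ⟨hm, hrest⟩ := ih t h
          exact ⟨List.mem_cons_of_mem _ hm, by simpa using hrest⟩

lemma mem_Iset_le_elen (l : List CPart) (i : ℕ) (hi : i ∈ Iset l) : i ≤ elen l := by
  obtain ⟨h1, h2⟩ := hi
  by_contra hgt
  push_neg at hgt
  have hlen : (expandTag l).length ≤ i - 1 := by
    have : elen l ≤ i - 1 := by omega
    exact this
  unfold tagAt at h2
  rw [List.getD_eq_getElem?_getD, List.getElem?_eq_none hlen] at h2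
  simp at h2

lemma T_nonempty (l : List CPart) (i : ℕ) (hi : i ∈ Iset l) :
    {x | i < x ∧ (x ∈ Jset l ∨ x = elen l + 1)}.Nonempty :=
  ⟨elen l + 1, by have := mem_Iset_le_elen l i hi; omega, Or.inr rfl⟩

lemma nextJ_mem (l : List CPart) (i : ℕ) (hi : i ∈ Iset l) :
    nextJ l i ∈ {x | i < x ∧ (x ∈ Jset l ∨ x = elen l + 1)} :=
  Nat.sInf_mem (T_nonempty l i hi)

lemma lt_nextJ (l : List CPart) (i : ℕ) (hi : i ∈ Iset l) : i < nextJ l i :=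
  (nextJ_mem l i hi).1

lemma nextJ_not_Iset (l : List CPart) (i : ℕ) (hi : i ∈ Iset l) :
    nextJ l i ∉ Iset l := by
  intro hmem
  rcases (nextJ_mem l i hi).2 with hJ | hE
  · have := hJ.2
    have := hmem.2
    omega
  · have h2 := hmem.2
    rw [hE] at h2
    have hlen : (expandTag l).length ≤ elen l + 1 - 1 := by
      show (expandTag l).length ≤ _
      have : elen l = (expandTag l).length := rfl
      omega
    unfold tagAt at h2
    rw [List.getD_eq_getElem?_getD, List.getElem?_eq_none hlen] at h2
    simp at h2

lemma nextJ_congr (l : List CPart) (i b : ℕ) (hi : i ∈ Iset l) (hib : i ≤ b)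
    (hbj : b < nextJ l i) : nextJ l b = nextJ l i := by
  have hmem := nextJ_mem l i hi
  apply le_antisymm
  · exact Nat.sInf_le ⟨hbj, hmem.2⟩
  · refine le_csInf ⟨nextJ l i, hbj, hmem.2⟩ ?_
    intro x hx
    exact Nat.sInf_le ⟨lt_of_le_of_lt hib hx.1, hx.2⟩

lemma S_bdd (n : ℕ) (l : List CPart) (i : ℕ) :
    BddAbove {u | u ∈ Iset l ∧ i < u ∧ u < nextJ l i ∧ brCond n l i u} :=
  ⟨nextJ l i, fun _ hx => le_of_lt hx.2.2.1⟩

lemma le_Br (n : ℕ) (l : List CPart) (i : ℕ) (hi : i ∈ Iset l) : i ≤ Br n l i := by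
  unfold Br
  split_ifs with h1 h2
  · exact (lt_nextJ l i hi).le
  · exact ((Nat.sSup_mem h2 (S_bdd n l i)).2.1).le
  · exact le_rfl

lemma Br_le_nextJ (n : ℕ) (l : List CPart) (i : ℕ) (hi : i ∈ Iset l) :
    Br n l i ≤ nextJ l i := by
  unfold Br
  split_ifs with h1 h2
  · exact le_rfl
  · exact ((Nat.sSup_mem h2 (S_bdd n l i)).2.2.1).le
  · exact (lt_nextJ l i hi).le

lemma Br_eq_nextJ (n : ℕ) (l : List CPart) (i : ℕ)
    (h1 : brCond n l i (nextJ l i)) : Br n l i = nextJ l i := by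
  unfold Br; rw [if_pos h1]

lemma Br_eq_sSup (n : ℕ) (l : List CPart) (i : ℕ)
    (h1 : ¬ brCond n l i (nextJ l i))
    (h2 : {u | u ∈ Iset l ∧ i < u ∧ u < nextJ l i ∧ brCond n l i u}.Nonempty) :
    Br n l i = sSup {u | u ∈ Iset l ∧ i < u ∧ u < nextJ l i ∧ brCond n l i u} := by
  unfold Br; rw [if_neg h1, if_pos h2]

lemma Br_eq_self (n : ℕ) (l : List CPart) (i : ℕ)
    (h1 : ¬ brCond n l i (nextJ l i))
    (h2 : ¬ {u | u ∈ Iset l ∧ i < u ∧ u < nextJ l i ∧ brCond n l i u}.Nonempty) :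
    Br n l i = i := by
  unfold Br; rw [if_neg h1, if_neg h2]

lemma Iset_struct (n : ℕ) (l : List CPart) (h : memE n l) (b : ℕ) (hb : b ∈ Iset l) :
    ∃ i0 j0 : ℕ, i0 < j0 ∧ ∃ sz : ℤ,
      nuAt n l b = alphaP sz i0 j0 ∧ nuAt n l (b + 1) = betaP sz i0 j0 := by
  obtain ⟨hb1, hb2⟩ := hb
  unfold tagAt at hb2
  rw [List.getD_eq_getElem?_getD] at hb2
  rcases he : (expandTag l)[b - 1]? with _ | e
  · rw [he] at hb2; simp at hb2
  · rw [he] at hb2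
    simp only [Option.getD_some] at hb2
    obtain ⟨a, tg, x⟩ := e
    simp only at hb2
    subst hb2
    obtain ⟨hmem, i0, j0, hcol, ha, hnext⟩ := expand_struct l (b - 1) a x he
    have hij : i0 < j0 := by
      rcases h.1 x hmem with hP | hS
      · obtain ⟨_, k, _, _, hc⟩ := hP
        rw [hcol] at hc; simp at hc
      · obtain ⟨_, i1, j1, _, hij1, _, hc⟩ := hS
        rw [hcol] at hc
        simp only [Sum.inr.injEq, Prod.mk.injEq] at hc
        obtain ⟨hc1, hc2⟩ := hc
        omega
    refine ⟨i0, j0, hij, x.size, ?_, ?_⟩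
    · unfold nuAt
      rw [List.getD_eq_getElem?_getD, he]
      simp [ha]
    · unfold nuAt
      rw [List.getD_eq_getElem?_getD]
      have hb' : b + 1 - 1 = (b - 1) + 1 := by omega
      rw [hb', hnext]
      simp

lemma transfer (n : ℕ) (l : List CPart) (h : memE n l) (b u i' : ℕ) (hb : b ∈ Iset l)
    (hkey : ¬ succR n (nuAt n l (b + 1))
      (shift (nuAt n l u) (((u : ℤ) - (b : ℤ)) / 2 - 1)))
    (x : CPart)
    (hx : succR n x (shift (nuAt n l u) (((u : ℤ) - (i' : ℤ)) / 2 - 1))) :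
    succR n x (shift (nuAt n l b) (((b : ℤ) - (i' : ℤ)) / 2 - 1)) := by
  obtain ⟨i0, j0, hij, sz, hvb, hvb1⟩ := Iset_struct n l h b hb
  rw [hvb1] at hkey
  rw [hvb]
  have htrans : colLE n x.col (Sum.inl i0) → colLE n (Sum.inl j0) (nuAt n l u).col →
      colLE n x.col (nuAt n l u).col := by
    intro h1 h2
    refine le_trans (le_trans h1 ?_) h2
    show i0 * (n + 2) + (n + 1) ≤ j0 * (n + 2) + (n + 1)
    have := Nat.mul_le_mul_right (n + 2) (le_of_lt hij)
    omega
  unfold succR shift at *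
  by_cases hp : sz % 2 = 0 <;>
    simp only [alphaP, betaP, hp, if_true, if_false, reduceIte] at *
  · by_cases h1 : colLE n (Sum.inl i0) (nuAt n l u).col <;>
    by_cases h2 : colLE n x.col (nuAt n l u).col <;>
    by_cases h3 : colLE n x.col (Sum.inl j0) <;>
    simp only [chi, h1, h2, h3, if_true, if_false, reduceIte,
      not_false_iff] at hkey hx ⊢ <;> omega
  · by_cases h1 : colLE n (Sum.inl j0) (nuAt n l u).col <;>
    by_cases h2 : colLE n x.col (nuAt n l u).col <;>
    by_cases h3 : colLE n x.col (Sum.inl i0) <;>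
    simp only [chi, h1, h2, h3, if_true, if_false, reduceIte,
      not_false_iff] at hkey hx ⊢ <;>
      first
        | omega
        | exact absurd (htrans h3 h1) h2

lemma brComp (n : ℕ) (l : List CPart) (h : memE n l) (i b u : ℕ) (hb : b ∈ Iset l)
    (hib : i ≤ b) (hbu : b < u) (h1 : brCond n l i b) (h2 : brCond n l b u) :
    brCond n l i u := by
  intro i' hi' hii' hi'u
  by_cases hc : b ≤ i'
  · exact h2 i' hi' hc hi'u
  · push_neg at hc
    have hkey := h2 b hb le_rfl hbu
    intro hsucc
    exact h1 i' hi' hii' hc (transfer n l h b u i' hb hkey _ hsucc)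

end Aux

/-- For `ν ∈ E`, the Bridge function is non-decreasing on `I`, and
idempotent at indices whose Bridge lies in `I`. -/
theorem stmt_14 (n : ℕ) (ν : List CPart) (h : memE n ν) :
    (∀ i ∈ Iset ν, ∀ i' ∈ Iset ν, i ≤ i' → Br n ν i ≤ Br n ν i') ∧
    (∀ i ∈ Iset ν, Br n ν i ∈ Iset ν → Br n ν (Br n ν i) = Br n ν i) := by
  constructor
  · -- monotonicity
    intro i hi i' hi' hii'
    by_cases hcase : nextJ ν i ≤ i'
    · exact le_trans (Br_le_nextJ n ν i hi) (le_trans hcase (le_Br n ν i' hi'))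
    · push_neg at hcase
      have hj' : nextJ ν i' = nextJ ν i := nextJ_congr ν i i' hi hii' hcase
      by_cases h1 : brCond n ν i (nextJ ν i)
      · have hBi : Br n ν i = nextJ ν i := Br_eq_nextJ n ν i h1
        have hBi' : Br n ν i' = nextJ ν i' := by
          refine Br_eq_nextJ n ν i' ?_
          rw [hj']
          exact fun a ha hle hlt => h1 a ha (le_trans hii' hle) hlt
        rw [hBi, hBi', hj']
      · by_cases h2 : {u | u ∈ Iset ν ∧ i < u ∧ u < nextJ ν i ∧ brCond n ν i u}.Nonempty
        · have hm := Nat.sSup_mem h2 (S_bdd n ν i)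
          have hBi : Br n ν i = sSup {u | u ∈ Iset ν ∧ i < u ∧ u < nextJ ν i ∧ brCond n ν i u} :=
            Br_eq_sSup n ν i h1 h2
          set m := sSup {u | u ∈ Iset ν ∧ i < u ∧ u < nextJ ν i ∧ brCond n ν i u} with hmdef
          rw [hBi]
          by_cases h3 : brCond n ν i' (nextJ ν i')
          · rw [Br_eq_nextJ n ν i' h3, hj']
            exact hm.2.2.1.le
          · by_cases h4 : m ≤ i'
            · exact le_trans h4 (le_Br n ν i' hi')
            · push_neg at h4
              have hmS : m ∈ {u | u ∈ Iset ν ∧ i' < u ∧ u < nextJ ν i' ∧ brCond n ν i' u} := by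
                refine ⟨hm.1, h4, ?_, ?_⟩
                · rw [hj']; exact hm.2.2.1
                · exact fun a ha hle hlt => hm.2.2.2 a ha (le_trans hii' hle) hlt
              have hBi' : Br n ν i' =
                  sSup {u | u ∈ Iset ν ∧ i' < u ∧ u < nextJ ν i' ∧ brCond n ν i' u} :=
                Br_eq_sSup n ν i' h3 ⟨m, hmS⟩
              rw [hBi']
              exact le_csSup (S_bdd n ν i') hmS
        · have hBi : Br n ν i = i := Br_eq_self n ν i h1 h2
          rw [hBi]
          exact le_trans hii' (le_Br n ν i' hi')
  · -- idempotence
    intro i hi hBI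
    by_cases h1 : brCond n ν i (nextJ ν i)
    · exfalso
      rw [Br_eq_nextJ n ν i h1] at hBI
      exact nextJ_not_Iset ν i hi hBI
    · by_cases h2 : {u | u ∈ Iset ν ∧ i < u ∧ u < nextJ ν i ∧ brCond n ν i u}.Nonempty
      · have hm := Nat.sSup_mem h2 (S_bdd n ν i)
        have hBi : Br n ν i = sSup {u | u ∈ Iset ν ∧ i < u ∧ u < nextJ ν i ∧ brCond n ν i u} :=
          Br_eq_sSup n ν i h1 h2
        set b := sSup {u | u ∈ Iset ν ∧ i < u ∧ u < nextJ ν i ∧ brCond n ν i u} with hbdef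
        obtain ⟨hbI, hib, hbj, hcb⟩ := hm
        have hjb : nextJ ν b = nextJ ν i := nextJ_congr ν i b hi hib.le hbj
        have hnb1 : ¬ brCond n ν b (nextJ ν b) := by
          rw [hjb]
          intro hcon
          exact h1 (brComp n ν h i b (nextJ ν i) hbI hib.le hbj hcb hcon)
        have hnb2 : ¬ {u | u ∈ Iset ν ∧ b < u ∧ u < nextJ ν b ∧ brCond n ν b u}.Nonempty := by
          rintro ⟨u, huI, hbu, huj, hcond⟩
          rw [hjb] at huj
          have huS : u ∈ {u | u ∈ Iset ν ∧ i < u ∧ u < nextJ ν i ∧ brCond n ν i u} :=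
            ⟨huI, lt_trans hib hbu, huj, brComp n ν h i b u hbI hib.le hbu hcb hcond⟩
          have := le_csSup (S_bdd n ν i) huS
          omega
        rw [hBi, Br_eq_self n ν b hnb1 hnb2]
      · have hBi : Br n ν i = i := Br_eq_self n ν i h1 h2
        rw [hBi]
        exact hBi
end

section
/- Let ν ∈ E and let i ≤ i' be elements of I such that ν_i + ν_{i+1}, ν_{i+2} + ν_{i+3}, …, ν_{i'} + ν_{i'+1} are consecutive secondary parts of ν and each consecutive size difference among them is minimal, i.e., for each u ∈ [i, i') ∩ I the sizes satisfy (ν_u + ν_{u+1}) − (ν_{u+2} + ν_{u+3}) = Δ(p_u, p_{u+2}), where p_u, p_{u+2} are the respective secondary colors and Δ(p, q) := 1 + χ(p ≤ q) − χ((p,q) ∈ SP). If Br_ν(i') > i', then Br_ν(i) = Br_ν(i'). -/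
/-! ### Auxiliary lemmas for Statement 15 -/

lemma chi_nonneg (P : Prop) : 0 ≤ chi P := by unfold chi; split <;> norm_num

lemma chi_le_one (P : Prop) : chi P ≤ 1 := by unfold chi; split <;> norm_num

lemma chi_mono {P Q : Prop} (h : P → Q) : chi P ≤ chi Q := by
  unfold chi; split <;> split <;> simp_all

lemma chi_colLE_mono {n A B : ℕ} (h : A ≤ B) (c : Col) :
    chi (colLE n (Sum.inl B) c) ≤ chi (colLE n (Sum.inl A) c) := by
  apply chi_mono
  intro hB
  unfold colLE colKey at *
  have : A * (n + 2) + (n + 1) ≤ B * (n + 2) + (n + 1) :=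
    Nat.add_le_add_right (Nat.mul_le_mul_right _ h) _
  exact le_trans this hB

lemma lex_le_first {M a b c d : ℕ} (hd : d < M) (h : a * M + b ≤ c * M + d) : a ≤ c := by
  by_contra hc
  push_neg at hc
  have h3 : (c + 1) * M ≤ a * M := Nat.mul_le_mul_right _ hc
  have := calc a * M + b ≤ c * M + d := h
    _ < c * M + M := Nat.add_lt_add_left hd _
    _ = (c + 1) * M := by ring
    _ ≤ a * M := h3
    _ ≤ a * M + b := Nat.le_add_right _ _
  exact absurd this (lt_irrefl _)

lemma lex_le_second {M a b d : ℕ} (h : a * M + b ≤ a * M + d) : b ≤ d :=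
  le_of_add_le_add_left h

lemma betaP_size (m : ℤ) (a b : ℕ) : (betaP m a b).size = m / 2 := by
  unfold betaP
  rcases Int.emod_two_eq m with h | h
  · rw [if_pos h]
  · rw [if_neg (by omega)]
    show (m - 1) / 2 = m / 2
    omega

lemma betaP_col_even (m : ℤ) (a b : ℕ) (h : m % 2 = 0) : (betaP m a b).col = Sum.inl a := by
  unfold betaP; rw [if_pos h]

lemma betaP_col_odd (m : ℤ) (a b : ℕ) (h : m % 2 = 1) : (betaP m a b).col = Sum.inl b := by
  unfold betaP; rw [if_neg (by omega)]

/-- Key one-step inequality on lower halves of two consecutive minimal secondary parts. -/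
lemma lemA (n : ℕ) (m m' : ℤ) (x y x' y' : ℕ) (hxy : x < y) (hyn : y ≤ n)
    (hxy' : x' < y') (hyn' : y' ≤ n)
    (hd : m - m' = Delta n (Sum.inr (x, y)) (Sum.inr (x', y'))) (c : Col) :
    (betaP m x y).size ≤ (betaP m' x' y').size + 1
      + chi (colLE n (betaP m x y).col c) - chi (colLE n (betaP m' x' y').col c) := by
  rw [betaP_size, betaP_size]
  have hLE : colLE n (Sum.inr (x, y)) (Sum.inr (x', y')) ↔
      x * (n + 2) + y ≤ x' * (n + 2) + y' := Iff.rfl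
  have hSP : SP (Sum.inr (x, y)) (Sum.inr (x', y')) ↔
      ((x' < y' ∧ y' < x ∧ x < y) ∨ (x < x' ∧ x' < y' ∧ y' < y)) := Iff.rfl
  unfold Delta chi at hd
  by_cases hpq : colLE n (Sum.inr (x, y)) (Sum.inr (x', y')) <;>
    by_cases hsp : SP (Sum.inr (x, y)) (Sum.inr (x', y'))
  · -- colLE true, SP true : m - m' = 1
    rw [if_pos hpq, if_pos hsp] at hd
    have hxx' : x ≤ x' := lex_le_first (by omega) (hLE.1 hpq)
    rcases Int.emod_two_eq m with hm | hm <;> rcases Int.emod_two_eq m' with hm' | hm'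
    · omega
    · -- m even, m' odd : need x ≤ y'
      rw [betaP_col_even _ _ _ hm, betaP_col_odd _ _ _ hm']
      have hxle : x ≤ y' := by
        rcases hSP.1 hsp with ⟨h1, h2, h3⟩ | ⟨h1, h2, h3⟩ <;> omega
      have hmono := chi_colLE_mono (n := n) hxle c
      have hdiv : m / 2 = m' / 2 + 1 := by omega
      linarith
    · -- m odd, m' even
      rw [betaP_col_odd _ _ _ hm, betaP_col_even _ _ _ hm']
      have hdiv : m / 2 = m' / 2 := by omega
      have b1 := chi_nonneg (colLE n (Sum.inl y) c)
      have b2 := chi_le_one (colLE n (Sum.inl x') c)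
      linarith
    · omega
  · -- colLE true, SP false : m - m' = 2
    rw [if_pos hpq, if_neg hsp] at hd
    have hxx' : x ≤ x' := lex_le_first (by omega) (hLE.1 hpq)
    rcases Int.emod_two_eq m with hm | hm <;> rcases Int.emod_two_eq m' with hm' | hm'
    · rw [betaP_col_even _ _ _ hm, betaP_col_even _ _ _ hm']
      have hmono := chi_colLE_mono (n := n) hxx' c
      have hdiv : m / 2 = m' / 2 + 1 := by omega
      linarith
    · omega
    · omega
    · rw [betaP_col_odd _ _ _ hm, betaP_col_odd _ _ _ hm']
      have hyy' : y ≤ y' := by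
        rcases Nat.lt_or_ge x x' with hlt | hge
        · by_contra hc
          push_neg at hc
          exact hsp (hSP.2 (Or.inr ⟨hlt, hxy', hc⟩))
        · have hx : x = x' := le_antisymm hxx' hge
          have := hLE.1 hpq
          rw [hx] at this
          exact lex_le_second this
      have hmono := chi_colLE_mono (n := n) hyy' c
      have hdiv : m / 2 = m' / 2 + 1 := by omega
      linarith
  · -- colLE false, SP true : m - m' = 0
    rw [if_neg hpq, if_pos hsp] at hd
    rcases Int.emod_two_eq m with hm | hm <;> rcases Int.emod_two_eq m' with hm' | hm'
    · rw [betaP_col_even _ _ _ hm, betaP_col_even _ _ _ hm']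
      have hdiv : m / 2 = m' / 2 := by omega
      have b1 := chi_nonneg (colLE n (Sum.inl x) c)
      have b2 := chi_le_one (colLE n (Sum.inl x') c)
      linarith
    · omega
    · omega
    · rw [betaP_col_odd _ _ _ hm, betaP_col_odd _ _ _ hm']
      have hdiv : m / 2 = m' / 2 := by omega
      have b1 := chi_nonneg (colLE n (Sum.inl y) c)
      have b2 := chi_le_one (colLE n (Sum.inl y') c)
      linarith
  · -- colLE false, SP false : m - m' = 1
    rw [if_neg hpq, if_neg hsp] at hd
    have hx'x : x' ≤ x := by
      have : x' * (n + 2) + y' ≤ x * (n + 2) + y := le_of_lt (by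
        rw [hLE] at hpq; omega)
      exact lex_le_first (by omega) this
    rcases Int.emod_two_eq m with hm | hm <;> rcases Int.emod_two_eq m' with hm' | hm'
    · omega
    · -- m even, m' odd : need x ≤ y'
      rw [betaP_col_even _ _ _ hm, betaP_col_odd _ _ _ hm']
      have hxle : x ≤ y' := by
        by_contra hc
        push_neg at hc
        exact hsp (hSP.2 (Or.inl ⟨hxy', hc, hxy⟩))
      have hmono := chi_colLE_mono (n := n) hxle c
      have hdiv : m / 2 = m' / 2 + 1 := by omega
      linarith
    · rw [betaP_col_odd _ _ _ hm, betaP_col_even _ _ _ hm']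
      have hdiv : m / 2 = m' / 2 := by omega
      have b1 := chi_nonneg (colLE n (Sum.inl y) c)
      have b2 := chi_le_one (colLE n (Sum.inl x') c)
      linarith
    · omega


lemma expandTag_cons_inl (w : CPart) (l : List CPart) (m : ℕ) (hw : w.col = Sum.inl m) :
    expandTag (w :: l) = (w, 0, w) :: expandTag l := by
  simp [expandTag, hw]

lemma expandTag_cons_inr (w : CPart) (l : List CPart) (a b : ℕ) (hw : w.col = Sum.inr (a, b)) :
    expandTag (w :: l) =
      (alphaP w.size a b, 1, w) :: (betaP w.size a b, 2, w) :: expandTag l := by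
  simp [expandTag, hw]

lemma core_tag1 (l : List CPart) : ∀ (k : ℕ) (d : CPart × ℕ × CPart),
    d.2.1 = 3 → ((expandTag l).getD k d).2.1 = 1 →
    ∃ w ∈ l, ∃ a b : ℕ, w.col = Sum.inr (a, b) ∧ k + 1 < (expandTag l).length ∧
      (∀ d', (expandTag l).getD k d' = (alphaP w.size a b, 1, w)) ∧
      (∀ d', (expandTag l).getD (k + 1) d' = (betaP w.size a b, 2, w)) := by
  induction l with
  | nil =>
    intro k d hd h
    simp [expandTag] at h
    omega
  | cons w l ih =>
    intro k d hd h
    rcases hw : w.col with m | ⟨a, b⟩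
    · rw [expandTag_cons_inl w l m hw] at h ⊢
      rcases k with _ | k
      · rw [List.getD_cons_zero] at h
        simp at h
      · rw [List.getD_cons_succ] at h
        obtain ⟨w', hw', a, b, hcol, hlen, h1, h2⟩ := ih k d hd h
        refine ⟨w', List.mem_cons_of_mem _ hw', a, b, hcol, ?_, ?_, ?_⟩
        · simp only [List.length_cons]; omega
        · intro d'; rw [List.getD_cons_succ]; exact h1 d'
        · intro d'; rw [List.getD_cons_succ]; exact h2 d'
    · rw [expandTag_cons_inr w l a b hw] at h ⊢
      rcases k with _ | k
      · refine ⟨w, List.mem_cons_self, a, b, hw, ?_, ?_, ?_⟩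
        · simp only [List.length_cons]; omega
        · intro d'; rw [List.getD_cons_zero]
        · intro d'; rw [List.getD_cons_succ, List.getD_cons_zero]
      · rcases k with _ | k
        · rw [List.getD_cons_succ, List.getD_cons_zero] at h
          simp at h
        · rw [List.getD_cons_succ, List.getD_cons_succ] at h
          obtain ⟨w', hw', a', b', hcol, hlen, h1, h2⟩ := ih k d hd h
          refine ⟨w', List.mem_cons_of_mem _ hw', a', b', hcol, ?_, ?_, ?_⟩
          · simp only [List.length_cons]; omega
          · intro d'; rw [List.getD_cons_succ, List.getD_cons_succ]; exact h1 d'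
          · intro d'; rw [List.getD_cons_succ, List.getD_cons_succ]; exact h2 d'

lemma tag1_spec (n : ℕ) (l : List CPart) (x : ℕ) (hx : 1 ≤ x) (htag : tagAt l x = 1) :
    ∃ w ∈ l, ∃ a b : ℕ, w.col = Sum.inr (a, b) ∧
      origAt n l x = w ∧ tagAt l (x + 1) = 2 ∧
      nuAt n l (x + 1) = betaP w.size a b ∧ x + 1 ≤ elen l := by
  unfold tagAt at htag
  obtain ⟨w, hw, a, b, hcol, hlen, h1, h2⟩ :=
    core_tag1 l (x - 1) (⟨0, Sum.inl 0⟩, 3, ⟨0, Sum.inl 0⟩) rfl htag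
  have hx1 : x + 1 - 1 = x - 1 + 1 := by omega
  refine ⟨w, hw, a, b, hcol, ?_, ?_, ?_, ?_⟩
  · unfold origAt; rw [h1]
  · unfold tagAt; rw [hx1, h2]
  · unfold nuAt; rw [hx1, h2]
  · unfold elen; omega

lemma valid_of_mem {n : ℕ} {ν : List CPart} (h : memE n ν) {w : CPart} (hw : w ∈ ν)
    {a b : ℕ} (hcol : w.col = Sum.inr (a, b)) : a < b ∧ b ≤ n := by
  rcases h.1 w hw with ⟨-, i0, -, -, hc⟩ | ⟨-, a0, b0, -, hab, hbn, hc⟩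
  · rw [hcol] at hc; simp at hc
  · rw [hcol] at hc
    simp only [Sum.inr.injEq, Prod.mk.injEq] at hc
    obtain ⟨h1, h2⟩ := hc
    subst h1; subst h2
    exact ⟨hab, hbn⟩

lemma telescope (n : ℕ) (ν : List CPart) (h : memE n ν) (i t : ℕ) (hi1 : 1 ≤ i)
    (hall : ∀ k, k ≤ t → (i + 2 * k) ∈ Iset ν)
    (hmin : ∀ k, k + 1 ≤ t →
      (origAt n ν (i + 2 * k)).size - (origAt n ν (i + 2 * k + 2)).size =
        Delta n (origAt n ν (i + 2 * k)).col (origAt n ν (i + 2 * k + 2)).col)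
    (c : Col) :
    ∀ j k, k + j = t →
      (nuAt n ν (i + 2 * k + 1)).size ≤ (nuAt n ν (i + 2 * t + 1)).size + (j : ℤ)
        + chi (colLE n (nuAt n ν (i + 2 * k + 1)).col c)
        - chi (colLE n (nuAt n ν (i + 2 * t + 1)).col c) := by
  intro j
  induction j with
  | zero =>
    intro k hk
    have hkt : k = t := by omega
    subst hkt
    push_cast
    linarith
  | succ j ih =>
    intro k hk
    have IH := ih (k + 1) (by omega)
    obtain ⟨w, hwmem, a, b, hcol, horig, -, hnu, -⟩ :=
      tag1_spec n ν (i + 2 * k) (by omega) (hall k (by omega)).2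
    obtain ⟨w', hwmem', a', b', hcol', horig', -, hnu', -⟩ :=
      tag1_spec n ν (i + 2 * (k + 1)) (by omega) (hall (k + 1) (by omega)).2
    have hv := valid_of_mem h hwmem hcol
    have hv' := valid_of_mem h hwmem' hcol'
    have hstep := hmin k (by omega)
    have e1 : i + 2 * (k + 1) = i + 2 * k + 2 := by ring
    rw [← e1, horig, horig', hcol, hcol'] at hstep
    have hA := lemA n w.size w'.size a b a' b' hv.1 hv.2 hv'.1 hv'.2 hstep c
    rw [← hnu, ← hnu'] at hA
    push_cast
    push_cast at IH
    linarith


lemma shift_size (x : CPart) (m : ℤ) : (shift x m).size = x.size + m := rfl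

lemma shift_col (x : CPart) (m : ℤ) : (shift x m).col = x.col := rfl

lemma Br_eq_of (n : ℕ) (ν : List CPart) (i i' : ℕ) (hii' : i ≤ i')
    (hJeq : nextJ ν i = nextJ ν i') (hJgt : i' < nextJ ν i')
    (hfwd : ∀ u, brCond n ν i u → brCond n ν i' u)
    (hback : ∀ u, i' < u → brCond n ν i' u → brCond n ν i u)
    (hbr : i' < Br n ν i') : Br n ν i = Br n ν i' := by
  by_cases h1 : brCond n ν i' (nextJ ν i')
  · have h2 : brCond n ν i (nextJ ν i) := by rw [hJeq]; exact hback _ hJgt h1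
    unfold Br
    rw [if_pos h2, if_pos h1, hJeq]
  · have hn1 : ¬ brCond n ν i (nextJ ν i) := fun hc => h1 (hJeq ▸ hfwd _ hc)
    have hbr' := hbr
    unfold Br at hbr'
    rw [if_neg h1] at hbr'
    by_cases h2 : {u | u ∈ Iset ν ∧ i' < u ∧ u < nextJ ν i' ∧ brCond n ν i' u}.Nonempty
    · have hbdd' : BddAbove {u | u ∈ Iset ν ∧ i' < u ∧ u < nextJ ν i' ∧ brCond n ν i' u} :=
        ⟨nextJ ν i', fun x hx => le_of_lt hx.2.2.1⟩
      obtain ⟨hu0I, hu0gt, hu0lt, hu0b⟩ := Nat.sSup_mem h2 hbdd'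
      have hmemS : sSup {u | u ∈ Iset ν ∧ i' < u ∧ u < nextJ ν i' ∧ brCond n ν i' u} ∈
          {u | u ∈ Iset ν ∧ i < u ∧ u < nextJ ν i ∧ brCond n ν i u} :=
        ⟨hu0I, by omega, by rw [hJeq]; exact hu0lt, hback _ hu0gt hu0b⟩
      have hne : ({u | u ∈ Iset ν ∧ i < u ∧ u < nextJ ν i ∧ brCond n ν i u}).Nonempty :=
        ⟨_, hmemS⟩
      have hbdd : BddAbove {u | u ∈ Iset ν ∧ i < u ∧ u < nextJ ν i ∧ brCond n ν i u} :=
        ⟨nextJ ν i, fun x hx => le_of_lt hx.2.2.1⟩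
      obtain ⟨hvI, hvgt, hvlt, hvb⟩ := Nat.sSup_mem hne hbdd
      have hle1 : sSup {u | u ∈ Iset ν ∧ i' < u ∧ u < nextJ ν i' ∧ brCond n ν i' u} ≤
          sSup {u | u ∈ Iset ν ∧ i < u ∧ u < nextJ ν i ∧ brCond n ν i u} :=
        le_csSup hbdd hmemS
      have hle2 : sSup {u | u ∈ Iset ν ∧ i < u ∧ u < nextJ ν i ∧ brCond n ν i u} ≤
          sSup {u | u ∈ Iset ν ∧ i' < u ∧ u < nextJ ν i' ∧ brCond n ν i' u} := by
        rcases le_or_gt (sSup {u | u ∈ Iset ν ∧ i < u ∧ u < nextJ ν i ∧ brCond n ν i u}) i'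
          with hc | hc
        · omega
        · exact le_csSup hbdd' ⟨hvI, hc, by rw [← hJeq]; exact hvlt, hfwd _ hvb⟩
      unfold Br
      rw [if_neg hn1, if_pos hne, if_neg h1, if_pos h2]
      omega
    · rw [if_neg h2] at hbr'
      omega

/-- If `ν_i + ν_{i+1}, …, ν_{i'} + ν_{i'+1}` are consecutive secondary
parts of `ν ∈ E` whose consecutive size differences are all minimal (equal to `Δ` of the
corresponding colors) and `Br_ν(i') > i'`, then `Br_ν(i) = Br_ν(i')`. -/
theorem stmt_15 (n : ℕ) (ν : List CPart) (h : memE n ν) (i i' : ℕ)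
    (hi : i ∈ Iset ν) (hi' : i' ∈ Iset ν)
    (ht : ∃ t : ℕ, i' = i + 2 * t)
    (hall : ∀ k : ℕ, i + 2 * k ≤ i' → (i + 2 * k) ∈ Iset ν)
    (hmin : ∀ k : ℕ, i + 2 * k + 2 ≤ i' →
      (origAt n ν (i + 2 * k)).size - (origAt n ν (i + 2 * k + 2)).size =
        Delta n (origAt n ν (i + 2 * k)).col (origAt n ν (i + 2 * k + 2)).col)
    (hbr : i' < Br n ν i') :
    Br n ν i = Br n ν i' := by
  obtain ⟨t, hti⟩ := ht
  have hi1 : 1 ≤ i := hi.1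
  have hallk : ∀ k, k ≤ t → (i + 2 * k) ∈ Iset ν := fun k hk => hall k (by omega)
  have hmink : ∀ k, k + 1 ≤ t →
      (origAt n ν (i + 2 * k)).size - (origAt n ν (i + 2 * k + 2)).size =
        Delta n (origAt n ν (i + 2 * k)).col (origAt n ν (i + 2 * k + 2)).col :=
    fun k hk => hmin k (by omega)
  have hseg : ∀ x, i < x → x ≤ i' → tagAt ν x ≠ 0 ∧ x ≤ elen ν := by
    intro x hx1 hx2
    rcases Nat.even_or_odd (x - i) with ⟨k, hk⟩ | ⟨k, hk⟩
    · have hx : x = i + 2 * k := by omega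
      have htg := (hallk k (by omega)).2
      obtain ⟨w, -, a, b, -, -, -, -, hle⟩ := tag1_spec n ν (i + 2 * k) (by omega) htg
      constructor
      · rw [hx]; omega
      · omega
    · have hx : x = i + 2 * k + 1 := by omega
      have htg := (hallk k (by omega)).2
      obtain ⟨w, -, a, b, -, -, htg2, -, hle⟩ := tag1_spec n ν (i + 2 * k) (by omega) htg
      constructor
      · rw [hx]; omega
      · omega
  have hJeq : nextJ ν i = nextJ ν i' := by
    unfold nextJ
    congr 1
    ext x
    simp only [Set.mem_setOf_eq]
    constructor
    · rintro ⟨hx, hP⟩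
      refine ⟨?_, hP⟩
      by_contra hle
      push_neg at hle
      rcases hP with hJ | hE
      · exact (hseg x hx hle).1 hJ.2
      · have := (hseg x hx hle).2; omega
    · rintro ⟨hx, hP⟩
      exact ⟨by omega, hP⟩
  have hi'len : i' + 1 ≤ elen ν := by
    obtain ⟨w, -, a, b, -, -, -, -, hle⟩ := tag1_spec n ν i' hi'.1 hi'.2
    exact hle
  have hJgt : i' < nextJ ν i' := by
    have hmem : nextJ ν i' ∈ {x | i' < x ∧ (x ∈ Jset ν ∨ x = elen ν + 1)} :=
      Nat.sInf_mem ⟨elen ν + 1, by omega, Or.inr rfl⟩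
    exact hmem.1
  have hIodd : ∀ x, x ∈ Iset ν → i ≤ x → x < i' → ∃ k, x = i + 2 * k ∧ k < t := by
    intro x hx hxi hxi'
    rcases Nat.even_or_odd (x - i) with ⟨k, hk⟩ | ⟨k, hk⟩
    · exact ⟨k, by omega, by omega⟩
    · exfalso
      obtain ⟨w, -, a, b, -, -, htg2, -, -⟩ :=
        tag1_spec n ν (i + 2 * k) (by omega) (hallk k (by omega)).2
      have hxtag := hx.2
      have hx1 : x = i + 2 * k + 1 := by omega
      rw [hx1] at hxtag
      omega
  have hback : ∀ u, i' < u → brCond n ν i' u → brCond n ν i u := by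
    intro u hu hb v hIv hliv hltv
    rcases le_or_gt i' v with hcase | hcase
    · exact hb v hIv hcase hltv
    · obtain ⟨k, hkeq, hkt⟩ := hIodd v hIv hliv hcase
      subst hkeq
      have H := hb i' hi' le_rfl hu
      have T := telescope n ν h i t hi1 hallk hmink (nuAt n ν u).col (t - k) k (by omega)
      have hcast : ((t - k : ℕ) : ℤ) = (t : ℤ) - (k : ℤ) := by omega
      rw [hcast] at T
      have hti' : i + 2 * t = i' := by omega
      rw [hti'] at T
      have hdiv : ((u : ℤ) - (↑(i + 2 * k))) / 2 =
          ((u : ℤ) - (i' : ℤ)) / 2 + ((t : ℤ) - (k : ℤ)) := by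
        have h1 : ((u : ℤ) - (↑(i + 2 * k))) =
            ((u : ℤ) - (i' : ℤ)) + ((t : ℤ) - (k : ℤ)) * 2 := by
          push_cast
          omega
        rw [h1, Int.add_mul_ediv_right _ _ (by norm_num : (2:ℤ) ≠ 0)]
      simp only [succR, shift_size, shift_col] at H ⊢
      push_neg at H ⊢
      rw [hdiv]
      linarith
  have hfwd : ∀ u, brCond n ν i u → brCond n ν i' u :=
    fun u hb v hIv hliv hltv => hb v hIv (by omega) hltv
  exact Br_eq_of n ν i i' (by omega) hJeq hJgt hfwd hback hbr
end

section
/- Let n = 4 with primary colors a < b < c < d. For every k ≥ 1, the three-part partitions ((k+2)_{cd}, (k+2)_{ab}, k_c) and ((k+2)_{cd}, (k+2)_{ab}, k_d) belong to E but not to E_1; for every k ≥ 2, the partition ((k+2)_{ad}, (k+1)_{bc}, k_a) belongs to E but not to E_1; and the partition (3_{ad}, 2_{bc}, 1_a) belongs to E_1. -/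
section
variable (s1 s2 s3 : ℤ) (i1 j1 i2 j2 m : ℕ)

def L : List CPart := [⟨s1, Sum.inr (i1,j1)⟩, ⟨s2, Sum.inr (i2,j2)⟩, ⟨s3, Sum.inl m⟩]

example : tagAt (L s1 s2 s3 i1 j1 i2 j2 m) 1 = 1 := rfl
example : tagAt (L s1 s2 s3 i1 j1 i2 j2 m) 2 = 2 := rfl
example : tagAt (L s1 s2 s3 i1 j1 i2 j2 m) 3 = 1 := rfl
example : tagAt (L s1 s2 s3 i1 j1 i2 j2 m) 4 = 2 := rfl
example : tagAt (L s1 s2 s3 i1 j1 i2 j2 m) 5 = 0 := rfl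
example : tagAt (L s1 s2 s3 i1 j1 i2 j2 m) 6 = 3 := rfl
example : nuAt 4 (L s1 s2 s3 i1 j1 i2 j2 m) 1 = alphaP s1 i1 j1 := rfl
example : nuAt 4 (L s1 s2 s3 i1 j1 i2 j2 m) 2 = betaP s1 i1 j1 := rfl
example : nuAt 4 (L s1 s2 s3 i1 j1 i2 j2 m) 4 = betaP s2 i2 j2 := rfl
example : nuAt 4 (L s1 s2 s3 i1 j1 i2 j2 m) 5 = ⟨s3, Sum.inl m⟩ := rfl
example : origAt 4 (L s1 s2 s3 i1 j1 i2 j2 m) 1 = ⟨s1, Sum.inr (i1,j1)⟩ := rfl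
example : origAt 4 (L s1 s2 s3 i1 j1 i2 j2 m) 3 = ⟨s2, Sum.inr (i2,j2)⟩ := rfl
example : elen (L s1 s2 s3 i1 j1 i2 j2 m) = 5 := rfl
end
section
variable (s1 s2 s3 : ℤ) (i1 j1 i2 j2 m : ℕ)

lemma tag_ge (x : ℕ) (hx : 6 ≤ x) : tagAt (L s1 s2 s3 i1 j1 i2 j2 m) x = 3 := by
  unfold tagAt
  rw [List.getD_eq_default]
  show 5 ≤ x - 1
  omega

lemma Iset_char (x : ℕ) : x ∈ Iset (L s1 s2 s3 i1 j1 i2 j2 m) ↔ x = 1 ∨ x = 3 := by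
  constructor
  · rintro ⟨h1, h2⟩
    by_contra hc
    push_neg at hc
    rcases lt_or_ge x 6 with h | h
    · interval_cases x <;> simp [tagAt, expandTag, L] at h2 <;> omega
    · rw [tag_ge _ _ _ _ _ _ _ _ _ h] at h2; omega
  · rintro (rfl | rfl) <;> exact ⟨by omega, rfl⟩

lemma Jset_char (x : ℕ) : x ∈ Jset (L s1 s2 s3 i1 j1 i2 j2 m) ↔ x = 5 := by
  constructor
  · rintro ⟨h1, h2⟩
    by_contra hc
    rcases lt_or_ge x 6 with h | h
    · interval_cases x <;> simp [tagAt, expandTag, L] at h2 <;> try omega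
    · rw [tag_ge _ _ _ _ _ _ _ _ _ h] at h2; omega
  · rintro rfl; exact ⟨by omega, rfl⟩

lemma nextJ_eq : nextJ (L s1 s2 s3 i1 j1 i2 j2 m) 1 = 5 := by
  have h5 : (5:ℕ) ∈ {x | 1 < x ∧ (x ∈ Jset (L s1 s2 s3 i1 j1 i2 j2 m) ∨ x = elen (L s1 s2 s3 i1 j1 i2 j2 m) + 1)} := by
    exact ⟨by omega, Or.inl ((Jset_char _ _ _ _ _ _ _ _ 5).2 rfl)⟩
  refine le_antisymm (Nat.sInf_le h5) (le_csInf ⟨5, h5⟩ ?_)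
  rintro x ⟨hx1, hx2 | hx2⟩
  · have := (Jset_char s1 s2 s3 i1 j1 i2 j2 m x).1 hx2; omega
  · have : elen (L s1 s2 s3 i1 j1 i2 j2 m) = 5 := rfl
    omega
end
section
variable (k : ℤ)

lemma br1 (hk : 1 ≤ k) : brCond 4 (L (k+2) (k+2) k 3 4 1 2 3) 1 5 := by
  intro i' hi' h1 h5
  have hm : (k+2) % 2 = k % 2 := by omega
  rcases (Iset_char _ _ _ _ _ _ _ _ i').1 hi' with rfl | rfl
  · show ¬ succR 4 (betaP (k+2) 3 4) (shift ⟨k, Sum.inl 3⟩ _)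
    rcases Int.emod_two_eq k with hp | hp <;>
      simp [succR, betaP, chi, colLE, colKey, shift, hm, hp] <;> omega
  · show ¬ succR 4 (betaP (k+2) 1 2) (shift ⟨k, Sum.inl 3⟩ _)
    rcases Int.emod_two_eq k with hp | hp <;>
      simp [succR, betaP, chi, colLE, colKey, shift, hm, hp] <;> omega

lemma Br1 (hk : 1 ≤ k) : Br 4 (L (k+2) (k+2) k 3 4 1 2 3) 1 = 5 := by
  rw [Br, nextJ_eq, if_pos (br1 k hk)]

lemma ts1 (hk : 1 ≤ k) : 1 ∈ TSet 4 (L (k+2) (k+2) k 3 4 1 2 3) := by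
  refine ⟨(Iset_char _ _ _ _ _ _ _ _ 1).2 (Or.inl rfl), (Iset_char _ _ _ _ _ _ _ _ 3).2 (Or.inr rfl), ?_, Or.inl rfl⟩
  show ¬ rtri 4 ⟨k+2, Sum.inr (3,4)⟩ ⟨k+2, Sum.inr (1,2)⟩
  simp [rtri, isPri, succR, succeqR, chi, colLE, colLT, colKey, shift]

lemma notE11 (hk : 1 ≤ k) : ¬ memE1 4 (L (k+2) (k+2) k 3 4 1 2 3) := by
  rintro ⟨-, h⟩
  have := h 1 (ts1 k hk) (by rw [Br1 k hk]; omega)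
  rw [Br1 k hk] at this
  revert this
  show ¬ succR 4 ⟨k+2, Sum.inr (3,4)⟩ (shift ⟨k, Sum.inl 3⟩ _)
  simp [succR, chi, colLE, colKey, shift]
end
section
variable (k : ℤ)

-- pattern 2: third part k_d
lemma br2 (hk : 1 ≤ k) : brCond 4 (L (k+2) (k+2) k 3 4 1 2 4) 1 5 := by
  intro i' hi' h1 h5
  have hm : (k+2) % 2 = k % 2 := by omega
  rcases (Iset_char _ _ _ _ _ _ _ _ i').1 hi' with rfl | rfl
  · show ¬ succR 4 (betaP (k+2) 3 4) (shift ⟨k, Sum.inl 4⟩ _)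
    rcases Int.emod_two_eq k with hp | hp <;>
      simp [succR, betaP, chi, colLE, colKey, shift, hm, hp] <;> omega
  · show ¬ succR 4 (betaP (k+2) 1 2) (shift ⟨k, Sum.inl 4⟩ _)
    rcases Int.emod_two_eq k with hp | hp <;>
      simp [succR, betaP, chi, colLE, colKey, shift, hm, hp] <;> omega

lemma Br2 (hk : 1 ≤ k) : Br 4 (L (k+2) (k+2) k 3 4 1 2 4) 1 = 5 := by
  rw [Br, nextJ_eq, if_pos (br2 k hk)]

lemma ts2 (hk : 1 ≤ k) : 1 ∈ TSet 4 (L (k+2) (k+2) k 3 4 1 2 4) := by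
  refine ⟨(Iset_char _ _ _ _ _ _ _ _ 1).2 (Or.inl rfl), (Iset_char _ _ _ _ _ _ _ _ 3).2 (Or.inr rfl), ?_, Or.inl rfl⟩
  show ¬ rtri 4 ⟨k+2, Sum.inr (3,4)⟩ ⟨k+2, Sum.inr (1,2)⟩
  simp [rtri, isPri, succR, succeqR, chi, colLE, colLT, colKey, shift]

lemma notE12 (hk : 1 ≤ k) : ¬ memE1 4 (L (k+2) (k+2) k 3 4 1 2 4) := by
  rintro ⟨-, h⟩
  have := h 1 (ts2 k hk) (by rw [Br2 k hk]; omega)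
  rw [Br2 k hk] at this
  revert this
  show ¬ succR 4 ⟨k+2, Sum.inr (3,4)⟩ (shift ⟨k, Sum.inl 4⟩ _)
  simp [succR, chi, colLE, colKey, shift]

-- pattern 3
lemma br3 (hk : 2 ≤ k) : brCond 4 (L (k+2) (k+1) k 1 4 2 3 1) 1 5 := by
  intro i' hi' h1 h5
  have hm : (k+2) % 2 = k % 2 := by omega
  have hm1 : (k+1) % 2 = 1 - k % 2 := by omega
  rcases (Iset_char _ _ _ _ _ _ _ _ i').1 hi' with rfl | rfl
  · show ¬ succR 4 (betaP (k+2) 1 4) (shift ⟨k, Sum.inl 1⟩ _)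
    rcases Int.emod_two_eq k with hp | hp <;>
      simp [succR, betaP, chi, colLE, colKey, shift, hm, hp] <;> omega
  · show ¬ succR 4 (betaP (k+1) 2 3) (shift ⟨k, Sum.inl 1⟩ _)
    rcases Int.emod_two_eq k with hp | hp <;>
      simp [succR, betaP, chi, colLE, colKey, shift, hm1, hp] <;> omega

lemma Br3 (hk : 2 ≤ k) : Br 4 (L (k+2) (k+1) k 1 4 2 3 1) 1 = 5 := by
  rw [Br, nextJ_eq, if_pos (br3 k hk)]

lemma ts3 (hk : 2 ≤ k) : 1 ∈ TSet 4 (L (k+2) (k+1) k 1 4 2 3 1) := by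
  refine ⟨(Iset_char _ _ _ _ _ _ _ _ 1).2 (Or.inl rfl), (Iset_char _ _ _ _ _ _ _ _ 3).2 (Or.inr rfl), ?_, Or.inl rfl⟩
  show ¬ rtri 4 ⟨k+2, Sum.inr (1,4)⟩ ⟨k+1, Sum.inr (2,3)⟩
  simp [rtri, isPri, succR, succeqR, chi, colLE, colLT, colKey, shift]
  omega

lemma notE13 (hk : 2 ≤ k) : ¬ memE1 4 (L (k+2) (k+1) k 1 4 2 3 1) := by
  rintro ⟨-, h⟩
  have := h 1 (ts3 k hk) (by rw [Br3 k hk]; omega)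
  rw [Br3 k hk] at this
  revert this
  show ¬ succR 4 ⟨k+2, Sum.inr (1,4)⟩ (shift ⟨k, Sum.inl 1⟩ _)
  simp [succR, chi, colLE, colKey, shift]
end
section
variable (k : ℤ)

lemma mem1 (hk : 1 ≤ k) (m : ℕ) (hm : 1 ≤ m) (hm4 : m ≤ 4) :
    memE 4 (L (k+2) (k+2) k 3 4 1 2 m) := by
  constructor
  · intro x hx
    simp [L] at hx
    rcases hx with rfl | rfl | rfl
    · exact Or.inr ⟨(by omega : (2:ℤ) ≤ k+2), 3, 4, by omega, by omega, by omega, rfl⟩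
    · exact Or.inr ⟨(by omega : (2:ℤ) ≤ k+2), 1, 2, by omega, by omega, by omega, rfl⟩
    · exact Or.inl ⟨(by omega : (1:ℤ) ≤ k), m, hm, hm4, rfl⟩
  · simp only [L, List.Chain', List.isChain_cons_cons, List.isChain_singleton, and_true]
    constructor
    · exact Or.inr (Or.inr (by
        constructor
        · show SP (Sum.inr (3,4)) (Sum.inr (1,2)); simp [SP]
        · simp [succR, chi, colLE, colKey]))
    · exact Or.inl (by
        constructor
        · right; exact ⟨m, rfl⟩
        · simp [succeqR, chi, colLT, colKey, shift] <;> omega)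

lemma mem3 (hk : 1 ≤ k) : memE 4 (L (k+2) (k+1) k 1 4 2 3 1) := by
  constructor
  · intro x hx
    simp [L] at hx
    rcases hx with rfl | rfl | rfl
    · exact Or.inr ⟨(by omega : (2:ℤ) ≤ k+2), 1, 4, by omega, by omega, by omega, rfl⟩
    · exact Or.inr ⟨(by omega : (2:ℤ) ≤ k+1), 2, 3, by omega, by omega, by omega, rfl⟩
    · exact Or.inl ⟨(by omega : (1:ℤ) ≤ k), 1, by omega, by omega, rfl⟩
  · simp only [L, List.Chain', List.isChain_cons_cons, List.isChain_singleton, and_true]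
    constructor
    · exact Or.inr (Or.inr (by
        constructor
        · show SP (Sum.inr (1,4)) (Sum.inr (2,3)); simp [SP]
        · simp [succR, chi, colLE, colKey] <;> omega))
    · exact Or.inl (by
        constructor
        · right; exact ⟨1, rfl⟩
        · simp [succeqR, chi, colLT, colKey, shift] <;> omega)
end

lemma brF : ¬ brCond 4 (L 3 2 1 1 4 2 3 1) 1 5 := by
  intro h
  have := h 3 ((Iset_char _ _ _ _ _ _ _ _ 3).2 (Or.inr rfl)) (by omega) (by omega)
  apply this
  show succR 4 (betaP 2 2 3) (shift ⟨1, Sum.inl 1⟩ _)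
  simp [succR, betaP, chi, colLE, colKey, shift]

lemma brF3 : ¬ brCond 4 (L 3 2 1 1 4 2 3 1) 1 3 := by
  intro h
  have := h 1 ((Iset_char _ _ _ _ _ _ _ _ 1).2 (Or.inl rfl)) (by omega) (by omega)
  apply this
  show succR 4 (betaP 3 1 4) (shift (alphaP 2 2 3) _)
  simp [succR, betaP, alphaP, chi, colLE, colKey, shift]

lemma BrLast : Br 4 (L 3 2 1 1 4 2 3 1) 1 = 1 := by
  rw [Br, nextJ_eq, if_neg brF, if_neg]
  rintro ⟨u, hu1, hu2, hu3, hu4⟩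
  rcases (Iset_char _ _ _ _ _ _ _ _ u).1 hu1 with rfl | rfl
  · omega
  · exact brF3 hu4

lemma lastE1 : memE1 4 (L 3 2 1 1 4 2 3 1) := by
  refine ⟨mem3 1 le_rfl, ?_⟩
  intro i hi hBr
  exfalso
  obtain ⟨h1, h2, -⟩ := hi
  rcases (Iset_char _ _ _ _ _ _ _ _ i).1 h1 with rfl | rfl
  · rw [BrLast] at hBr; omega
  · rcases (Iset_char _ _ _ _ _ _ _ _ 5).1 h2 with h | h <;> omega

/-- (n = 4, colors `a,b,c,d = a_1,a_2,a_3,a_4`.) The patterns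
`((k+2)_{cd}, (k+2)_{ab}, k_c)` and `((k+2)_{cd}, (k+2)_{ab}, k_d)` for `k ≥ 1`, and
`((k+2)_{ad}, (k+1)_{bc}, k_a)` for `k ≥ 2`, are in `E` but not `E₁`; the partition
`(3_{ad}, 2_{bc}, 1_a)` is in `E₁`. -/
theorem stmt_17 :
    (∀ k : ℤ, 1 ≤ k →
      (memE 4 [⟨k + 2, Sum.inr (3, 4)⟩, ⟨k + 2, Sum.inr (1, 2)⟩, ⟨k, Sum.inl 3⟩] ∧
        ¬ memE1 4 [⟨k + 2, Sum.inr (3, 4)⟩, ⟨k + 2, Sum.inr (1, 2)⟩, ⟨k, Sum.inl 3⟩]) ∧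
      (memE 4 [⟨k + 2, Sum.inr (3, 4)⟩, ⟨k + 2, Sum.inr (1, 2)⟩, ⟨k, Sum.inl 4⟩] ∧
        ¬ memE1 4 [⟨k + 2, Sum.inr (3, 4)⟩, ⟨k + 2, Sum.inr (1, 2)⟩, ⟨k, Sum.inl 4⟩])) ∧
    (∀ k : ℤ, 2 ≤ k →
      memE 4 [⟨k + 2, Sum.inr (1, 4)⟩, ⟨k + 1, Sum.inr (2, 3)⟩, ⟨k, Sum.inl 1⟩] ∧
        ¬ memE1 4 [⟨k + 2, Sum.inr (1, 4)⟩, ⟨k + 1, Sum.inr (2, 3)⟩, ⟨k, Sum.inl 1⟩]) ∧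
    memE1 4 [⟨3, Sum.inr (1, 4)⟩, ⟨2, Sum.inr (2, 3)⟩, ⟨1, Sum.inl 1⟩] := by
  refine ⟨fun k hk => ⟨⟨mem1 k hk 3 (by omega) (by omega), notE11 k hk⟩,
      ⟨mem1 k hk 4 (by omega) (by omega), notE12 k hk⟩⟩,
    fun k hk => ⟨mem3 k (by omega), notE13 k hk⟩, lastE1⟩
end

section
/- Let n = 5 with primary colors a < b < c < d < e. For every pair of secondary parts k_p and l_q (sizes at least 2) with k_p ≫ l_q and such that (k_p, l_q) is not of the form (h_{cd}, h_{ab}) for some integer h, there exists an integer h such that k_p ≻ h_{cd} and h_{cd} ⪰ l_q. -/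
set_option maxHeartbeats 4000000 in
/-- (n = 5.) For secondary parts `k_p ≫ l_q` with `(k_p, l_q)` not of
the form `(h_{cd}, h_{ab})`, there is an integer `h` with `k_p ≻ h_{cd}` and `h_{cd} ⪰ l_q`. -/
theorem stmt_18 (r s x y : ℕ) (hr : 1 ≤ r) (hrs : r < s) (hs : s ≤ 5)
    (hx : 1 ≤ x) (hxy : x < y) (hy : y ≤ 5) (k l : ℤ) (hk : 2 ≤ k) (hl : 2 ≤ l)
    (hgg : gg 5 ⟨k, Sum.inr (r, s)⟩ ⟨l, Sum.inr (x, y)⟩)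
    (hnot : ¬(r = 3 ∧ s = 4 ∧ x = 1 ∧ y = 2 ∧ k = l)) :
    ∃ h : ℤ, succR 5 ⟨k, Sum.inr (r, s)⟩ ⟨h, Sum.inr (3, 4)⟩ ∧
      succeqR 5 ⟨h, Sum.inr (3, 4)⟩ ⟨l, Sum.inr (x, y)⟩ := by
  refine ⟨l + chi (colLT 5 (Sum.inr (3, 4)) (Sum.inr (x, y))), ?_, ?_⟩
  · have hr4 : r ≤ 4 := by omega
    have hx4 : x ≤ 4 := by omega
    interval_cases r <;> interval_cases s <;> interval_cases x <;> interval_cases y <;>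
      (simp only [gg, succR, succeqR, isPri, shift, SP, chi, colLE, colLT, colKey]
        at hgg hnot ⊢ <;> split_ifs at hgg ⊢ <;> simp_all <;> omega)
  · simp only [succeqR, chi, shift]
    omega
end
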